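/- Let P = 5Δ be the Veronese triangle of degree 5 and Q the Lawrence prism with vertices (0,0), (3,0), (2,1), (0,1). Then #(2Q ∩ ℤ²) = 18 and #(interior(P+Q) ∩ ℤ²) = 20, and there are exactly three lattice translates m + Q (m ∈ ℤ²) for which P \ (m+Q) is disconnected, each having exactly two connected components; hence #(2Q) + 3 > #(interior(P+Q)). -/

import Mathlib

open Pointwise

/-- Embedding of the lattice `ℤ²` into `ℝ²`. -/
def latPt (m : ℤ × ℤ) : ℝ × ℝ := ((m.1 : ℝ), (m.2 : ℝ))

/-- Number of lattice points contained in a subset of `ℝ²`. -/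
noncomputable def latCount (A : Set (ℝ × ℝ)) : ℕ := {m : ℤ × ℤ | latPt m ∈ A}.ncard

/-- Translate of a subset of `ℝ²` by a lattice vector. -/
def latTrans (m : ℤ × ℤ) (A : Set (ℝ × ℝ)) : Set (ℝ × ℝ) := (fun v => v + latPt m) '' A

/-- Number of connected components of a subset of `ℝ²`. -/
noncomputable def ncomp (A : Set (ℝ × ℝ)) : ℕ :=
  ((fun x => connectedComponentIn A x) '' A).ncard

/-- The standard triangle with vertices `(0,0)`, `(1,0)`, `(0,1)`. -/
noncomputable def stdTriangle : Set (ℝ × ℝ) :=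
  convexHull ℝ {((0 : ℝ), (0 : ℝ)), (1, 0), (0, 1)}

/-- For `P = 5Δ` and `Q` the Lawrence prism with vertices
`(0,0), (3,0), (2,1), (0,1)`: `#(2Q) = 18`, `#((P+Q)°) = 20`, there are exactly
three lattice translates `m + Q` for which `P \ (m+Q)` is disconnected, each
with exactly two connected components; hence `18 + 3 > 20`. -/

def poly (c h : ℝ) : Set (ℝ × ℝ) := {p | 0 ≤ p.1 ∧ 0 ≤ p.2 ∧ p.2 ≤ h ∧ p.1 + p.2 ≤ c}

lemma convex_poly (c h : ℝ) : Convex ℝ (poly c h) := by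
  have h1 : Convex ℝ {p : ℝ × ℝ | 0 ≤ p.1} :=
    convex_halfSpace_ge (IsLinearMap.mk (fun a b => rfl) (fun a b => rfl)) 0
  have h2 : Convex ℝ {p : ℝ × ℝ | 0 ≤ p.2} :=
    convex_halfSpace_ge (IsLinearMap.mk (fun a b => rfl) (fun a b => rfl)) 0
  have h3 : Convex ℝ {p : ℝ × ℝ | p.2 ≤ h} :=
    convex_halfSpace_le (IsLinearMap.mk (fun a b => rfl) (fun a b => rfl)) h
  have h4 : Convex ℝ {p : ℝ × ℝ | p.1 + p.2 ≤ c} := by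
    refine convex_halfSpace_le ⟨fun a b => ?_, fun a b => ?_⟩ c
    · simp [Prod.fst_add, Prod.snd_add]; ring
    · simp; ring
  exact fun x hx y hy a b ha hb hab =>
    ⟨h1 hx.1 hy.1 ha hb hab, h2 hx.2.1 hy.2.1 ha hb hab,
     h3 hx.2.2.1 hy.2.2.1 ha hb hab, h4 hx.2.2.2 hy.2.2.2 ha hb hab⟩

lemma hull4 (c h : ℝ) (h0 : 0 < h) (hhc : h ≤ c) :
    convexHull ℝ {((0 : ℝ), (0 : ℝ)), (c, 0), (c - h, h), (0, h)} = poly c h := by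
  apply le_antisymm
  · apply convexHull_min _ (convex_poly c h)
    rintro p (rfl | rfl | rfl | rfl) <;>
      simp [poly] <;> constructor <;> linarith
  · rintro ⟨x, y⟩ ⟨hx, hy, hyh, hxy⟩
    simp only [Set.mem_setOf_eq] at *
    have hA : ((0 : ℝ), y) ∈ convexHull ℝ {((0 : ℝ), (0 : ℝ)), (c, 0), (c - h, h), (0, h)} := by
      have : ((0:ℝ), y) ∈ segment ℝ ((0:ℝ), (0:ℝ)) ((0:ℝ), h) := by
        refine ⟨1 - y / h, y / h, by
          have : y/h ≤ 1 := (div_le_one h0).mpr hyh; linarith, by positivity, by ring, ?_⟩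
        simp [Prod.ext_iff]; field_simp
      refine segment_subset_convexHull (by simp) (by simp) this
    have hB : ((c - y : ℝ), y) ∈ convexHull ℝ {((0 : ℝ), (0 : ℝ)), (c, 0), (c - h, h), (0, h)} := by
      have : ((c - y : ℝ), y) ∈ segment ℝ ((c:ℝ), (0:ℝ)) ((c - h : ℝ), h) := by
        refine ⟨1 - y / h, y / h, by
          have : y/h ≤ 1 := (div_le_one h0).mpr hyh; linarith, by positivity, by ring, ?_⟩
        simp [Prod.ext_iff]; constructor <;> field_simp <;> ring
      refine segment_subset_convexHull (by simp) (by simp) this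
    rcases eq_or_lt_of_le hx with hx0 | hx0
    · rw [← hx0] at *; exact hA
    · have hcy : 0 < c - y := by linarith
      have : ((x : ℝ), y) ∈ segment ℝ ((0:ℝ), y) ((c - y : ℝ), y) := by
        refine ⟨1 - x / (c - y), x / (c - y), ?_, by positivity, by ring, ?_⟩
        · have : x / (c - y) ≤ 1 := by rw [div_le_one hcy]; linarith
          linarith
        · simp [Prod.ext_iff]; field_simp; ring; exact ⟨trivial, trivial⟩
      exact (convex_convexHull ℝ _).segment_subset hA hB this

lemma stdTri_eq : stdTriangle = poly 1 1 := by
  have : ({((0 : ℝ), (0 : ℝ)), (1, 0), (0, 1)} : Set (ℝ × ℝ)) =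
      {((0 : ℝ), (0 : ℝ)), (1, 0), (1 - 1, 1), (0, 1)} := by
    norm_num
  rw [stdTriangle, this, hull4 1 1 one_pos le_rfl]

lemma P_eq : (5 : ℝ) • stdTriangle = poly 5 5 := by
  rw [stdTri_eq]
  ext p
  rw [Set.mem_smul_set]
  constructor
  · rintro ⟨q, ⟨h1, h2, h3, h4⟩, rfl⟩
    refine ⟨by simpa using by linarith, by simpa using by linarith, ?_, ?_⟩ <;>
      simp [Prod.smul_fst, Prod.smul_snd] <;> linarith
  · rintro ⟨h1, h2, h3, h4⟩
    refine ⟨(p.1 / 5, p.2 / 5), ⟨by simpa using by linarith, by simpa using by linarith,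
      by simpa using by linarith, by simp; linarith⟩, ?_⟩
    simp [Prod.ext_iff]; constructor <;> ring

lemma Q_eq : convexHull ℝ {((0 : ℝ), (0 : ℝ)), (3, 0), (2, 1), (0, 1)} = poly 3 1 := by
  have := hull4 3 1 one_pos (by norm_num)
  norm_num at this
  exact this

lemma twoQ_eq : (2 : ℝ) • poly 3 1 = poly 6 2 := by
  ext p
  rw [Set.mem_smul_set]
  constructor
  · rintro ⟨q, ⟨h1, h2, h3, h4⟩, rfl⟩
    refine ⟨by simpa using by linarith, by simpa using by linarith, ?_, ?_⟩ <;>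
      simp [Prod.smul_fst, Prod.smul_snd] <;> linarith
  · rintro ⟨h1, h2, h3, h4⟩
    refine ⟨(p.1 / 2, p.2 / 2), ⟨by simpa using by linarith, by simpa using by linarith,
      by simpa using by linarith, by simp; linarith⟩, ?_⟩
    simp [Prod.ext_iff]; constructor <;> ring

lemma PQ_eq : poly 5 5 + poly 3 1 = poly 8 6 := by
  apply le_antisymm
  · rintro p ⟨u, hu, v, hv, rfl⟩
    obtain ⟨h1, h2, h3, h4⟩ := hu
    obtain ⟨h5, h6, h7, h8⟩ := hv
    refine ⟨?_, ?_, ?_, ?_⟩ <;> simp [Prod.fst_add, Prod.snd_add] <;> linarith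
  · have h86 := hull4 8 6 (by norm_num) (by norm_num)
    norm_num at h86
    rw [← h86]
    apply convexHull_min _ ((convex_poly 5 5).add (convex_poly 3 1))
    rintro p (rfl | rfl | rfl | rfl)
    · exact ⟨(0,0), by norm_num [poly], (0,0), by norm_num [poly], by norm_num⟩
    · exact ⟨(5,0), by norm_num [poly], (3,0), by norm_num [poly], by norm_num [Prod.ext_iff]⟩
    · exact ⟨(0,5), by norm_num [poly], (2,1), by norm_num [poly], by norm_num [Prod.ext_iff]⟩
    · exact ⟨(0,5), by norm_num [poly], (0,1), by norm_num [poly], by norm_num [Prod.ext_iff]⟩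

lemma int_poly86 : interior (poly 8 6) =
    {p : ℝ × ℝ | 0 < p.1 ∧ 0 < p.2 ∧ p.2 < 6 ∧ p.1 + p.2 < 8} := by
  apply le_antisymm
  · intro p hp
    rw [mem_interior_iff_mem_nhds, Metric.mem_nhds_iff] at hp
    obtain ⟨ε, hε, hball⟩ := hp
    have key : ∀ q : ℝ × ℝ, dist q p < ε → q ∈ poly 8 6 := fun q hq => hball hq
    have d1 : ((p.1 - ε/2, p.2) : ℝ × ℝ) ∈ poly 8 6 := by
      apply key; rw [Prod.dist_eq]; simp [Real.dist_eq, abs_of_pos hε]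
      first | (constructor <;> linarith) | linarith
    have d2 : ((p.1, p.2 - ε/2) : ℝ × ℝ) ∈ poly 8 6 := by
      apply key; rw [Prod.dist_eq]; simp [Real.dist_eq, abs_of_pos hε]
      first | (constructor <;> linarith) | linarith
    have d3 : ((p.1, p.2 + ε/2) : ℝ × ℝ) ∈ poly 8 6 := by
      apply key; rw [Prod.dist_eq]; simp [Real.dist_eq, abs_of_pos hε]
      first | (constructor <;> linarith) | linarith
    have d4 : ((p.1 + ε/2, p.2) : ℝ × ℝ) ∈ poly 8 6 := by
      apply key; rw [Prod.dist_eq]; simp [Real.dist_eq, abs_of_pos hε]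
      first | (constructor <;> linarith) | linarith
    obtain ⟨a1, -, -, -⟩ := d1
    obtain ⟨-, a2, -, -⟩ := d2
    obtain ⟨-, -, a3, -⟩ := d3
    obtain ⟨-, -, -, a4⟩ := d4
    simp only [Set.mem_setOf_eq] at *
    exact ⟨by linarith, by linarith, by linarith, by linarith⟩
  · apply interior_maximal
    · rintro p ⟨h1, h2, h3, h4⟩; exact ⟨h1.le, h2.le, h3.le, h4.le⟩
    · have o1 : IsOpen {p : ℝ × ℝ | 0 < p.1} := isOpen_lt continuous_const continuous_fst
      have o2 : IsOpen {p : ℝ × ℝ | 0 < p.2} := isOpen_lt continuous_const continuous_snd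
      have o3 : IsOpen {p : ℝ × ℝ | p.2 < 6} := isOpen_lt continuous_snd continuous_const
      have o4 : IsOpen {p : ℝ × ℝ | p.1 + p.2 < 8} :=
        isOpen_lt (continuous_fst.add continuous_snd) continuous_const
      have heq : {p : ℝ × ℝ | 0 < p.1 ∧ 0 < p.2 ∧ p.2 < 6 ∧ p.1 + p.2 < 8} =
          ({p : ℝ × ℝ | 0 < p.1} ∩ {p : ℝ × ℝ | 0 < p.2}) ∩
          ({p : ℝ × ℝ | p.2 < 6} ∩ {p : ℝ × ℝ | p.1 + p.2 < 8}) := by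
        ext p; simp [Set.mem_setOf_eq]; tauto
      rw [heq]; exact (o1.inter o2).inter (o3.inter o4)

noncomputable def F18 : Finset (ℤ × ℤ) := (Finset.Icc 0 6 ×ˢ Finset.Icc 0 2).filter (fun m => m.1 + m.2 ≤ 6)

noncomputable def F20 : Finset (ℤ × ℤ) := (Finset.Icc 1 6 ×ˢ Finset.Icc 1 5).filter (fun m => m.1 + m.2 ≤ 7)

lemma count18 : {m : ℤ × ℤ | latPt m ∈ poly 6 2}.ncard = 18 := by
  have hset : {m : ℤ × ℤ | latPt m ∈ poly 6 2} = ↑F18 := by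
    ext ⟨a, b⟩
    rw [Set.mem_setOf_eq, Finset.mem_coe]
    simp only [poly, latPt, Set.mem_setOf_eq, F18, Finset.mem_filter, Finset.mem_product,
      Finset.mem_Icc]
    constructor
    · rintro ⟨h1, h2, h3, h4⟩
      have h1' : (0:ℤ) ≤ a := by exact_mod_cast h1
      have h2' : (0:ℤ) ≤ b := by exact_mod_cast h2
      have h3' : b ≤ (2:ℤ) := by exact_mod_cast h3
      have h4' : a + b ≤ (6:ℤ) := by push_cast at h4; exact_mod_cast h4
      omega
    · intro h
      have hh : (0:ℤ) ≤ a ∧ (0:ℤ) ≤ b ∧ b ≤ (2:ℤ) ∧ a + b ≤ (6:ℤ) := by omega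
      refine ⟨by exact_mod_cast hh.1, by exact_mod_cast hh.2.1,
        by exact_mod_cast hh.2.2.1, by push_cast; exact_mod_cast hh.2.2.2⟩
  rw [hset, Set.ncard_coe_finset]
  decide

lemma count20 : {m : ℤ × ℤ |
    latPt m ∈ {p : ℝ × ℝ | 0 < p.1 ∧ 0 < p.2 ∧ p.2 < 6 ∧ p.1 + p.2 < 8}}.ncard = 20 := by
  have hset : {m : ℤ × ℤ | latPt m ∈ {p : ℝ × ℝ | 0 < p.1 ∧ 0 < p.2 ∧ p.2 < 6 ∧ p.1 + p.2 < 8}}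
      = ↑F20 := by
    ext ⟨a, b⟩
    rw [Set.mem_setOf_eq, Finset.mem_coe]
    simp only [latPt, Set.mem_setOf_eq, F20, Finset.mem_filter, Finset.mem_product,
      Finset.mem_Icc]
    constructor
    · rintro ⟨h1, h2, h3, h4⟩
      have h1' : (0:ℤ) < a := by exact_mod_cast h1
      have h2' : (0:ℤ) < b := by exact_mod_cast h2
      have h3' : b < (6:ℤ) := by exact_mod_cast h3
      have h4' : a + b < (8:ℤ) := by push_cast at h4; exact_mod_cast h4
      omega
    · intro h
      have hh : (0:ℤ) < a ∧ (0:ℤ) < b ∧ b < (6:ℤ) ∧ a + b < (8:ℤ) := by omega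
      refine ⟨by exact_mod_cast hh.1, by exact_mod_cast hh.2.1,
        by exact_mod_cast hh.2.2.1, by push_cast; exact_mod_cast hh.2.2.2⟩
  rw [hset, Set.ncard_coe_finset]
  decide

/-! ### Connectivity analysis -/

def Cset (a b : ℝ) : Set (ℝ × ℝ) :=
  {p | a ≤ p.1 ∧ b ≤ p.2 ∧ p.2 ≤ b + 1 ∧ p.1 + p.2 ≤ a + b + 3}

def Sset (a b : ℝ) : Set (ℝ × ℝ) := poly 5 5 \ Cset a b

def Bs (b : ℝ) : Set (ℝ × ℝ) := poly 5 5 ∩ {p | p.2 < b}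
def Ts (b : ℝ) : Set (ℝ × ℝ) := poly 5 5 ∩ {p | b + 1 < p.2}
def Ls (a : ℝ) : Set (ℝ × ℝ) := poly 5 5 ∩ {p | p.1 < a}
def Rs (a b : ℝ) : Set (ℝ × ℝ) := poly 5 5 ∩ {p | a + b + 3 < p.1 + p.2}

lemma lin_fst : IsLinearMap ℝ (fun p : ℝ × ℝ => p.1) := ⟨fun _ _ => rfl, fun _ _ => rfl⟩
lemma lin_snd : IsLinearMap ℝ (fun p : ℝ × ℝ => p.2) := ⟨fun _ _ => rfl, fun _ _ => rfl⟩
lemma lin_sum : IsLinearMap ℝ (fun p : ℝ × ℝ => p.1 + p.2) :=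
  ⟨fun p q => by simp [Prod.fst_add, Prod.snd_add]; ring, fun c p => by simp; ring⟩

lemma preBs (b : ℝ) : IsPreconnected (Bs b) :=
  ((convex_poly 5 5).inter (convex_halfSpace_lt lin_snd b)).isPreconnected
lemma preTs (b : ℝ) : IsPreconnected (Ts b) :=
  ((convex_poly 5 5).inter (convex_halfSpace_gt lin_snd (b+1))).isPreconnected
lemma preLs (a : ℝ) : IsPreconnected (Ls a) :=
  ((convex_poly 5 5).inter (convex_halfSpace_lt lin_fst a)).isPreconnected
lemma preRs (a b : ℝ) : IsPreconnected (Rs a b) :=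
  ((convex_poly 5 5).inter (convex_halfSpace_gt lin_sum (a+b+3))).isPreconnected

lemma S_eq1 (a b : ℝ) (hb : b ≤ 0) :
    Sset a b = (Ts b ∪ Ls a) ∪ Rs a b := by
  ext p
  simp only [Sset, Cset, poly, Bs, Ts, Ls, Rs, Set.mem_diff, Set.mem_setOf_eq,
    Set.mem_union, Set.mem_inter_iff, not_and_or, not_le]
  constructor
  · rintro ⟨hP, h | h | h | h⟩
    · exact Or.inl (Or.inr ⟨hP, h⟩)
    · exact absurd h (by push_neg; linarith [hP.2.1])
    · exact Or.inl (Or.inl ⟨hP, h⟩)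
    · exact Or.inr ⟨hP, h⟩
  · rintro ((⟨hP, h⟩ | ⟨hP, h⟩) | ⟨hP, h⟩)
    · exact ⟨hP, Or.inr (Or.inr (Or.inl h))⟩
    · exact ⟨hP, Or.inl h⟩
    · exact ⟨hP, Or.inr (Or.inr (Or.inr h))⟩

lemma S_eq2 (a b : ℝ) (hb : 4 ≤ b) :
    Sset a b = (Bs b ∪ Ls a) ∪ Rs a b := by
  ext p
  simp only [Sset, Cset, poly, Bs, Ts, Ls, Rs, Set.mem_diff, Set.mem_setOf_eq,
    Set.mem_union, Set.mem_inter_iff, not_and_or, not_le]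
  constructor
  · rintro ⟨hP, h | h | h | h⟩
    · exact Or.inl (Or.inr ⟨hP, h⟩)
    · exact Or.inl (Or.inl ⟨hP, h⟩)
    · exact absurd h (by push_neg; linarith [hP.2.2.1])
    · exact Or.inr ⟨hP, h⟩
  · rintro ((⟨hP, h⟩ | ⟨hP, h⟩) | ⟨hP, h⟩)
    · exact ⟨hP, Or.inr (Or.inl h)⟩
    · exact ⟨hP, Or.inl h⟩
    · exact ⟨hP, Or.inr (Or.inr (Or.inr h))⟩

lemma S_eq3 (a b : ℝ) (ha : 1 ≤ a) (hb1 : 1 ≤ b) :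
    Sset a b = (Ls a ∪ Bs b) ∪ Ts b := by
  ext p
  simp only [Sset, Cset, poly, Bs, Ts, Ls, Rs, Set.mem_diff, Set.mem_setOf_eq,
    Set.mem_union, Set.mem_inter_iff, not_and_or, not_le]
  constructor
  · rintro ⟨hP, h | h | h | h⟩
    · exact Or.inl (Or.inl ⟨hP, h⟩)
    · exact Or.inl (Or.inr ⟨hP, h⟩)
    · exact Or.inr ⟨hP, h⟩
    · exact absurd h (by push_neg; linarith [hP.2.2.2])
  · rintro ((⟨hP, h⟩ | ⟨hP, h⟩) | ⟨hP, h⟩)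
    · exact ⟨hP, Or.inl h⟩
    · exact ⟨hP, Or.inr (Or.inl h)⟩
    · exact ⟨hP, Or.inr (Or.inr (Or.inl h))⟩

lemma S_eq4 (a b : ℝ) (ha : a ≤ 0) :
    Sset a b = (Rs a b ∪ Bs b) ∪ Ts b := by
  ext p
  simp only [Sset, Cset, poly, Bs, Ts, Ls, Rs, Set.mem_diff, Set.mem_setOf_eq,
    Set.mem_union, Set.mem_inter_iff, not_and_or, not_le]
  constructor
  · rintro ⟨hP, h | h | h | h⟩
    · exact absurd h (by push_neg; linarith [hP.1])
    · exact Or.inl (Or.inr ⟨hP, h⟩)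
    · exact Or.inr ⟨hP, h⟩
    · exact Or.inl (Or.inl ⟨hP, h⟩)
  · rintro ((⟨hP, h⟩ | ⟨hP, h⟩) | ⟨hP, h⟩)
    · exact ⟨hP, Or.inr (Or.inr (Or.inr h))⟩
    · exact ⟨hP, Or.inr (Or.inl h)⟩
    · exact ⟨hP, Or.inr (Or.inr (Or.inl h))⟩

lemma Ls_empty {a : ℝ} (ha : a ≤ 0) : Ls a = ∅ := by
  ext p; simp only [Ls, poly, Set.mem_inter_iff, Set.mem_setOf_eq, Set.mem_empty_iff_false,
    iff_false, not_and]
  rintro ⟨h1, -⟩ ; intro h; linarith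

lemma Rs_empty {a b : ℝ} (hab : 2 ≤ a + b) : Rs a b = ∅ := by
  ext p; simp only [Rs, poly, Set.mem_inter_iff, Set.mem_setOf_eq, Set.mem_empty_iff_false,
    iff_false, not_and]
  rintro ⟨-, -, -, h4⟩; intro h; linarith

/-- union with a possibly-empty piece -/
lemma pre_union_pt {t s : Set (ℝ × ℝ)} (hT : IsPreconnected t) (hs : IsPreconnected s)
    (h : s = ∅ ∨ (s ∩ t).Nonempty) : IsPreconnected (t ∪ s) := by
  rcases h with rfl | ⟨x, hxs, hxt⟩
  · rwa [Set.union_empty]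
  · exact IsPreconnected.union x hxt hxs hT hs

lemma ncomp_def (A : Set (ℝ × ℝ)) :
    ((fun x => connectedComponentIn A x) '' A).ncard =
    ((fun x => connectedComponentIn A x) '' A).ncard := rfl

lemma comp_image_eq_singleton {S : Set (ℝ × ℝ)} (h : IsPreconnected S) (hne : S.Nonempty) :
    ((fun x => connectedComponentIn S x) '' S) = {S} := by
  ext y
  simp only [Set.mem_image, Set.mem_singleton_iff]
  constructor
  · rintro ⟨x, hx, rfl⟩; exact h.connectedComponentIn hx
  · rintro rfl; exact ⟨hne.choose, hne.choose_spec, h.connectedComponentIn hne.choose_spec⟩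

lemma conn (a b : ℤ) (h : ¬(a ≤ 0 ∧ 1 ≤ b ∧ b ≤ 3 ∧ 2 ≤ a + b)) :
    IsPreconnected (Sset a b) ∧ (Sset a b).Nonempty := by
  have hcase : b ≤ 0 ∨ 4 ≤ b ∨ (1 ≤ b ∧ b ≤ 3 ∧ 1 ≤ a) ∨ (1 ≤ b ∧ b ≤ 3 ∧ a + b ≤ 1) := by
    omega
  rcases hcase with hb | hb | ⟨hb1, hb3, ha⟩ | ⟨hb1, hb3, hab⟩
  · -- b ≤ 0 : S = (T ∪ L) ∪ R
    have hbr : (b : ℝ) ≤ 0 := by exact_mod_cast hb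
    rw [S_eq1 a b hbr]
    have hT2 : ((0 : ℝ), (2 : ℝ)) ∈ Ts b := by
      refine ⟨⟨le_rfl, by norm_num, by norm_num, by norm_num⟩, ?_⟩
      simp only [Set.mem_setOf_eq]; linarith
    constructor
    · apply pre_union_pt (pre_union_pt (preTs _) (preLs _) ?_) (preRs _ _) ?_
      · rcases le_or_gt a 0 with h' | h'
        · exact Or.inl (Ls_empty (by exact_mod_cast h'))
        · refine Or.inr ⟨((0 : ℝ), (2 : ℝ)), ⟨hT2.1, ?_⟩, hT2⟩
          simp only [Set.mem_setOf_eq]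
          have : (1 : ℝ) ≤ a := by exact_mod_cast h'
          linarith
      · rcases le_or_gt 2 (a + b) with h' | h'
        · exact Or.inl (Rs_empty (by exact_mod_cast h'))
        · have habr : (a : ℝ) + b ≤ 1 := by exact_mod_cast (by omega : a + b ≤ 1)
          refine Or.inr ⟨((0.5 : ℝ), (4.4 : ℝ)), ⟨⟨by norm_num, by norm_num, by norm_num,
            by norm_num⟩, ?_⟩, Or.inl ⟨⟨by norm_num, by norm_num, by norm_num, by norm_num⟩, ?_⟩⟩
          · simp only [Set.mem_setOf_eq]; linarith
          · simp only [Set.mem_setOf_eq]; linarith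
    · exact ⟨_, Or.inl (Or.inl hT2)⟩
  · -- 4 ≤ b : S = (B ∪ L) ∪ R
    have hbr : (4 : ℝ) ≤ b := by exact_mod_cast hb
    rw [S_eq2 a b hbr]
    have hB0 : ((0 : ℝ), (0 : ℝ)) ∈ Bs b := by
      refine ⟨⟨le_rfl, le_rfl, by norm_num, by norm_num⟩, ?_⟩
      simp only [Set.mem_setOf_eq]; linarith
    constructor
    · apply pre_union_pt (pre_union_pt (preBs _) (preLs _) ?_) (preRs _ _) ?_
      · rcases le_or_gt a 0 with h' | h'
        · exact Or.inl (Ls_empty (by exact_mod_cast h'))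
        · refine Or.inr ⟨((0 : ℝ), (0 : ℝ)), ⟨hB0.1, ?_⟩, hB0⟩
          simp only [Set.mem_setOf_eq]
          have : (1 : ℝ) ≤ a := by exact_mod_cast h'
          linarith
      · rcases le_or_gt 2 (a + b) with h' | h'
        · exact Or.inl (Rs_empty (by exact_mod_cast h'))
        · have habr : (a : ℝ) + b ≤ 1 := by exact_mod_cast (by omega : a + b ≤ 1)
          refine Or.inr ⟨((4.5 : ℝ), (0 : ℝ)), ⟨⟨by norm_num, by norm_num, by norm_num,
            by norm_num⟩, ?_⟩, Or.inl ⟨⟨by norm_num, by norm_num, by norm_num, by norm_num⟩, ?_⟩⟩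
          · simp only [Set.mem_setOf_eq]; linarith
          · simp only [Set.mem_setOf_eq]; linarith
    · exact ⟨_, Or.inl (Or.inl hB0)⟩
  · -- 1 ≤ b ≤ 3, 1 ≤ a : S = (L ∪ B) ∪ T
    have har : (1 : ℝ) ≤ a := by exact_mod_cast ha
    have hb1r : (1 : ℝ) ≤ b := by exact_mod_cast hb1
    have hb3r : (b : ℝ) ≤ 3 := by exact_mod_cast hb3
    rw [S_eq3 a b har hb1r]
    have hL0 : ((0 : ℝ), (0 : ℝ)) ∈ Ls a := by
      refine ⟨⟨le_rfl, le_rfl, by norm_num, by norm_num⟩, ?_⟩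
      simp only [Set.mem_setOf_eq]; linarith
    constructor
    · apply pre_union_pt (pre_union_pt (preLs _) (preBs _) ?_) (preTs _) ?_
      · refine Or.inr ⟨((0 : ℝ), (0 : ℝ)), ⟨hL0.1, ?_⟩, hL0⟩
        simp only [Set.mem_setOf_eq]; linarith
      · refine Or.inr ⟨((0 : ℝ), (4.5 : ℝ)), ⟨⟨le_rfl, by norm_num, by norm_num, by norm_num⟩,
          ?_⟩, Or.inl ⟨⟨le_rfl, by norm_num, by norm_num, by norm_num⟩, ?_⟩⟩
        · simp only [Set.mem_setOf_eq]; linarith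
        · simp only [Set.mem_setOf_eq]; linarith
    · exact ⟨_, Or.inl (Or.inl hL0)⟩
  · -- 1 ≤ b ≤ 3, a + b ≤ 1 : S = (R ∪ B) ∪ T
    have har : (a : ℝ) ≤ 0 := by exact_mod_cast (by omega : a ≤ 0)
    have hb1r : (1 : ℝ) ≤ b := by exact_mod_cast hb1
    have hb3r : (b : ℝ) ≤ 3 := by exact_mod_cast hb3
    have habr : (a : ℝ) + b ≤ 1 := by exact_mod_cast hab
    rw [S_eq4 a b har]
    have hR0 : ((4.4 : ℝ), (0.5 : ℝ)) ∈ Rs a b := by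
      refine ⟨⟨by norm_num, by norm_num, by norm_num, by norm_num⟩, ?_⟩
      simp only [Set.mem_setOf_eq]; linarith
    constructor
    · apply pre_union_pt (pre_union_pt (preRs _ _) (preBs _) ?_) (preTs _) ?_
      · refine Or.inr ⟨((4.4 : ℝ), (0.5 : ℝ)), ⟨hR0.1, ?_⟩, hR0⟩
        simp only [Set.mem_setOf_eq]; linarith
      · refine Or.inr ⟨((0.5 : ℝ), (4.4 : ℝ)), ⟨⟨by norm_num, by norm_num, by norm_num,
          by norm_num⟩, ?_⟩, Or.inl ⟨⟨by norm_num, by norm_num, by norm_num, by norm_num⟩, ?_⟩⟩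
        · simp only [Set.mem_setOf_eq]; linarith
        · simp only [Set.mem_setOf_eq]; linarith
    · exact ⟨_, Or.inl (Or.inl hR0)⟩

lemma S_eq5 (a b : ℝ) (ha : a ≤ 0) (hab : 2 ≤ a + b) :
    Sset a b = Bs b ∪ Ts b := by
  ext p
  simp only [Sset, Cset, poly, Bs, Ts, Set.mem_diff, Set.mem_setOf_eq,
    Set.mem_union, Set.mem_inter_iff, not_and_or, not_le]
  constructor
  · rintro ⟨hP, h | h | h | h⟩
    · exact absurd h (by push_neg; linarith [hP.1])
    · exact Or.inl ⟨hP, h⟩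
    · exact Or.inr ⟨hP, h⟩
    · exact absurd h (by push_neg; linarith [hP.2.2.2])
  · rintro (⟨hP, h⟩ | ⟨hP, h⟩)
    · exact ⟨hP, Or.inr (Or.inl h)⟩
    · exact ⟨hP, Or.inr (Or.inr (Or.inl h))⟩

lemma ncomp_two (a b : ℤ) (ha : a ≤ 0) (hab : 2 ≤ a + b) (hb3 : b ≤ 3) :
    ((fun x => connectedComponentIn (Sset a b) x) '' (Sset a b)).ncard = 2 := by
  have hb2 : 2 ≤ b := by omega
  have har : (a : ℝ) ≤ 0 := by exact_mod_cast ha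
  have habr : (2 : ℝ) ≤ a + b := by exact_mod_cast hab
  have hb3r : (b : ℝ) ≤ 3 := by exact_mod_cast hb3
  have hb2r : (2 : ℝ) ≤ b := by exact_mod_cast hb2
  have hS : Sset a b = Bs b ∪ Ts b := S_eq5 a b har habr
  set U : Set (ℝ × ℝ) := {p | p.2 < (b : ℝ)} with hU
  set V : Set (ℝ × ℝ) := {p | (b : ℝ) + 1 < p.2} with hV
  have hUopen : IsOpen U := isOpen_lt continuous_snd continuous_const
  have hVopen : IsOpen V := isOpen_lt continuous_const continuous_snd
  have hUV : Disjoint U V := by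
    rw [Set.disjoint_left]; intro p hp hp'
    simp only [hU, hV, Set.mem_setOf_eq] at hp hp'; linarith
  have hSU : Sset a b ⊆ U ∪ V := by
    rw [hS]; rintro p (⟨-, h⟩ | ⟨-, h⟩)
    · exact Or.inl h
    · exact Or.inr h
  have hBU : Bs b = Sset a b ∩ U := by
    rw [hS]; ext p
    constructor
    · intro hp; exact ⟨Or.inl hp, hp.2⟩
    · rintro ⟨hp | hp, hU'⟩
      · exact hp
      · exfalso
        have h1 : p.2 < (b : ℝ) := hU'
        have h2 : (b : ℝ) + 1 < p.2 := hp.2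
        linarith
  have hTV : Ts b = Sset a b ∩ V := by
    rw [hS]; ext p
    constructor
    · intro hp; exact ⟨Or.inr hp, hp.2⟩
    · rintro ⟨hp | hp, hV'⟩
      · exfalso
        have h1 : (b : ℝ) + 1 < p.2 := hV'
        have h2 : p.2 < (b : ℝ) := hp.2
        linarith
      · exact hp
  have hB0 : ((0 : ℝ), (0 : ℝ)) ∈ Bs b :=
    ⟨⟨le_rfl, le_rfl, by norm_num, by norm_num⟩, by simp only [Set.mem_setOf_eq]; linarith⟩
  have hT0 : ((0 : ℝ), (4.5 : ℝ)) ∈ Ts b :=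
    ⟨⟨le_rfl, by norm_num, by norm_num, by norm_num⟩, by simp only [Set.mem_setOf_eq]; linarith⟩
  have hcompB : ∀ x ∈ Bs b, connectedComponentIn (Sset a b) x = Bs b := by
    intro x hx
    apply le_antisymm
    · have hsub : connectedComponentIn (Sset a b) x ⊆ U := by
        apply IsPreconnected.subset_left_of_subset_union hUopen hVopen hUV
          ((connectedComponentIn_subset _ _).trans hSU)
          ⟨x, mem_connectedComponentIn (by rw [hS]; exact Or.inl hx), hx.2⟩
          isPreconnected_connectedComponentIn
      rw [hBU]
      exact Set.subset_inter (connectedComponentIn_subset _ _) hsub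
    · exact (preBs b).subset_connectedComponentIn hx (by rw [hS]; exact Set.subset_union_left)
  have hcompT : ∀ x ∈ Ts b, connectedComponentIn (Sset a b) x = Ts b := by
    intro x hx
    apply le_antisymm
    · have hsub : connectedComponentIn (Sset a b) x ⊆ V := by
        apply IsPreconnected.subset_left_of_subset_union hVopen hUopen hUV.symm
          ((connectedComponentIn_subset _ _).trans
            (fun p hp => (hSU hp).elim Or.inr Or.inl))
          ⟨x, mem_connectedComponentIn (by rw [hS]; exact Or.inr hx), hx.2⟩
          isPreconnected_connectedComponentIn
      rw [hTV]
      exact Set.subset_inter (connectedComponentIn_subset _ _) hsub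
    · exact (preTs b).subset_connectedComponentIn hx (by rw [hS]; exact Set.subset_union_right)
  have himg : ((fun x => connectedComponentIn (Sset a b) x) '' (Sset a b)) = {Bs b, Ts b} := by
    ext y
    simp only [Set.mem_image, Set.mem_insert_iff, Set.mem_singleton_iff]
    constructor
    · rintro ⟨x, hx, rfl⟩
      rw [hS] at hx
      rcases hx with hx | hx
      · exact Or.inl (hcompB x hx)
      · exact Or.inr (hcompT x hx)
    · rintro (rfl | rfl)
      · exact ⟨_, by rw [hS]; exact Or.inl hB0, hcompB _ hB0⟩
      · exact ⟨_, by rw [hS]; exact Or.inr hT0, hcompT _ hT0⟩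
  rw [himg]
  apply Set.ncard_pair
  intro hBT
  have := hBT ▸ hB0
  have h45 : ((0 : ℝ), (0 : ℝ)).2 > (b : ℝ) + 1 := this.2
  simp only at h45
  linarith


noncomputable def F3 : Finset (ℤ × ℤ) := (Finset.Icc (-1) 0 ×ˢ Finset.Icc 2 3).filter (fun m => 2 ≤ m.1 + m.2)

lemma latTrans_eq (m : ℤ × ℤ) : latTrans m (poly 3 1) = Cset m.1 m.2 := by
  ext p
  simp only [latTrans, Set.mem_image, latPt, Cset, poly, Set.mem_setOf_eq]
  constructor
  · rintro ⟨q, ⟨h1, h2, h3, h4⟩, rfl⟩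
    simp only [Prod.fst_add, Prod.snd_add]
    refine ⟨by linarith, by linarith, by linarith, by linarith⟩
  · rintro ⟨h1, h2, h3, h4⟩
    refine ⟨(p.1 - (m.1 : ℝ), p.2 - (m.2 : ℝ)), ⟨by simp; linarith, by simp; linarith,
      by simp; linarith, by simp; linarith⟩, ?_⟩
    simp [Prod.ext_iff]

theorem stmt_12 (P Q : Set (ℝ × ℝ))
    (hPdef : P = (5 : ℝ) • stdTriangle)
    (hQdef : Q = convexHull ℝ {((0 : ℝ), (0 : ℝ)), (3, 0), (2, 1), (0, 1)}) :
    latCount ((2 : ℝ) • Q) = 18 ∧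
    latCount (interior (P + Q)) = 20 ∧
    {m : ℤ × ℤ | 2 ≤ ncomp (P \ latTrans m Q)}.ncard = 3 ∧
    (∀ m : ℤ × ℤ, 2 ≤ ncomp (P \ latTrans m Q) → ncomp (P \ latTrans m Q) = 2) ∧
    18 + 3 > 20 := by
  have hQ3 : Q = poly 3 1 := by rw [hQdef, Q_eq]
  have hP5 : P = poly 5 5 := by rw [hPdef, P_eq]
  have hPS : ∀ m : ℤ × ℤ, P \ latTrans m Q = Sset m.1 m.2 := by
    intro m
    rw [hP5, hQ3, latTrans_eq]
    rfl
  have key1 : ∀ m : ℤ × ℤ, ¬(m.1 ≤ 0 ∧ 1 ≤ m.2 ∧ m.2 ≤ 3 ∧ 2 ≤ m.1 + m.2) →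
      ncomp (P \ latTrans m Q) = 1 := by
    intro m hm
    obtain ⟨hpre, hne⟩ := conn m.1 m.2 hm
    rw [hPS m, ncomp, comp_image_eq_singleton hpre hne, Set.ncard_singleton]
  have key2 : ∀ m : ℤ × ℤ, (m.1 ≤ 0 ∧ 1 ≤ m.2 ∧ m.2 ≤ 3 ∧ 2 ≤ m.1 + m.2) →
      ncomp (P \ latTrans m Q) = 2 := by
    intro m hm
    rw [hPS m, ncomp]
    exact ncomp_two m.1 m.2 hm.1 hm.2.2.2 hm.2.2.1
  refine ⟨?_, ?_, ?_, ?_, by norm_num⟩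
  · rw [hQ3, latCount, twoQ_eq]
    exact count18
  · rw [latCount, hP5, hQ3, PQ_eq, int_poly86]
    exact count20
  · have hset : {m : ℤ × ℤ | 2 ≤ ncomp (P \ latTrans m Q)} = ↑F3 := by
      ext ⟨a, b⟩
      rw [Set.mem_setOf_eq, Finset.mem_coe]
      simp only [F3, Finset.mem_filter, Finset.mem_product, Finset.mem_Icc]
      constructor
      · intro h2
        by_cases hcond : ((a, b).1 ≤ 0 ∧ 1 ≤ (a, b).2 ∧ (a, b).2 ≤ 3 ∧ 2 ≤ (a, b).1 + (a, b).2)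
        · simp only at hcond; omega
        · rw [key1 (a, b) hcond] at h2; omega
      · intro h
        have hcond : ((a, b).1 ≤ 0 ∧ 1 ≤ (a, b).2 ∧ (a, b).2 ≤ 3 ∧ 2 ≤ (a, b).1 + (a, b).2) := by
          simp only; omega
        rw [key2 (a, b) hcond]
    rw [hset, Set.ncard_coe_finset]
    decide
  · intro m h2
    by_cases hcond : (m.1 ≤ 0 ∧ 1 ≤ m.2 ∧ m.2 ≤ 3 ∧ 2 ≤ m.1 + m.2)
    · exact key2 m hcond
    · rw [key1 m hcond] at h2; omega
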